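/- Let φ define a nondegenerate conic in the real projective plane, inscribed in a quadrilateral with vertices [u],[v],[w],[x] and tangency points [α₁u+β₁v], [α₂v+β₂w], [α₃w+β₃x], [α₄x+β₄u] on the four edge-lines (all αᵢ, βᵢ nonzero). Then the line through [α₁u+β₁v] and [α₃w+β₃x], the line through [α₂v+β₂w] and [α₄x+β₄u], and the two diagonals (the line through [u],[w] and the line through [v],[x]) are four concurrent lines. -/

import Mathlib

set_option maxHeartbeats 1000000 in
theorem stmt14_key (α₁ β₁ α₂ β₂ α₃ β₃ α₄ β₄ a b c d p q r e h lam mu nu g : ℝ)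
    (hα₁ : α₁ ≠ 0) (hβ₁ : β₁ ≠ 0) (hα₂ : α₂ ≠ 0) (hβ₂ : β₂ ≠ 0)
    (hα₃ : α₃ ≠ 0) (hβ₃ : β₃ ≠ 0) (hα₄ : α₄ ≠ 0) (hβ₄ : β₄ ≠ 0)
    (ha : a ≠ 0) (hlam : lam ≠ 0) (hmu : mu ≠ 0) (hnu : nu ≠ 0)
    (L1 : α₁*a + β₁*p = 0) (L2 : α₁*p + β₁*b = 0)
    (L3 : α₂*b + β₂*q = 0) (L4 : α₂*q + β₂*c = 0)
    (L5 : α₃*c + β₃*r = 0) (L6 : α₃*r + β₃*d = 0)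
    (L7 : α₄*d + β₄*e = 0) (L8 : α₄*e + β₄*a = 0)
    (E1 : e = lam*a + mu*p + nu*g) (E2 : h = lam*p + mu*b + nu*q)
    (E3 : r = lam*g + mu*q + nu*c) (E4 : d = lam*e + mu*h + nu*r)
    (N : α₁*g + β₁*q ≠ 0) :
    (α₃*β₁*lam + α₁*β₃*mu*nu = 0) ∧ (α₂*β₄*nu + α₄*β₂*lam*mu = 0) ∧
    (β₃*nu + α₃ ≠ 0) ∧ (α₄*lam + β₄ ≠ 0) := by
  have vp : β₁*p = -(α₁*a) := by linarith
  have vb : β₁^2*b = α₁^2*a := by linear_combination β₁*L2 - α₁*L1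
  have vq : β₁^2*β₂*q = -(α₁^2*α₂*a) := by linear_combination β₁^2*L3 - α₂*vb
  have vc : β₁^2*β₂^2*c = α₁^2*α₂^2*a := by linear_combination β₁^2*β₂*L4 - α₂*vq
  have vr : β₁^2*β₂^2*β₃*r = -(α₁^2*α₂^2*α₃*a) := by linear_combination β₁^2*β₂^2*L5 - α₃*vc
  have vd : β₁^2*β₂^2*β₃^2*d = α₁^2*α₂^2*α₃^2*a := by linear_combination β₁^2*β₂^2*β₃*L6 - α₃*vr
  have ve : α₄*e = -(β₄*a) := by linarith
  have hKa : (α₁*α₂*α₃*α₄)^2*a = (β₁*β₂*β₃*β₄)^2*a := by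
    linear_combination (α₄*β₁^2*β₂^2*β₃^2)*L7 - α₄^2*vd - (β₄*β₁^2*β₂^2*β₃^2)*ve
  have hK : (α₁*α₂*α₃*α₄ - β₁*β₂*β₃*β₄)*(α₁*α₂*α₃*α₄ + β₁*β₂*β₃*β₄) = 0 := by
    have h2 : ((α₁*α₂*α₃*α₄ - β₁*β₂*β₃*β₄)*(α₁*α₂*α₃*α₄ + β₁*β₂*β₃*β₄))*a = 0*a := by
      linear_combination hKa
    exact mul_right_cancel₀ ha h2
  have hA : lam*e - lam^2*a - lam*mu*p - nu*r + mu*nu*q + nu^2*c = 0 := by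
    linear_combination lam*E1 - nu*E3
  have hB : d - lam*e - lam*mu*p - mu^2*b - mu*nu*q - nu*r = 0 := by
    linear_combination E4 + mu*E2
  have hA' : β₁^2*β₂^2*β₃*β₄*lam*a + α₄*β₁^2*β₂^2*β₃*lam^2*a + α₁^2*α₂*α₄*β₂*β₃*mu*nu*a
      = α₁*α₄*β₁*β₂^2*β₃*lam*mu*a + α₁^2*α₂^2*α₃*α₄*nu*a + α₁^2*α₂^2*α₄*β₃*nu^2*a := by
    linear_combination (-(α₄*β₁^2*β₂^2*β₃))*hA + (β₁^2*β₂^2*β₃*lam)*ve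
      + (-(α₄*β₁*β₂^2*β₃*lam*mu))*vp + (-(α₄*nu))*vr + (α₄*β₂*β₃*mu*nu)*vq + (α₄*β₃*nu^2)*vc
  have hB' : α₁^2*α₂^2*α₃^2*α₄*a + β₁^2*β₂^2*β₃^2*β₄*lam*a + α₁*α₄*β₁*β₂^2*β₃^2*lam*mu*a
      + α₁^2*α₂*α₄*β₂*β₃^2*mu*nu*a + α₁^2*α₂^2*α₃*α₄*β₃*nu*a
      = α₁^2*α₄*β₂^2*β₃^2*mu^2*a := by
    linear_combination (α₄*β₁^2*β₂^2*β₃^2)*hB + (-(α₄))*vd + (β₁^2*β₂^2*β₃^2*lam)*ve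
      + (α₄*β₁*β₂^2*β₃^2*lam*mu)*vp + (α₄*β₂^2*β₃^2*mu^2)*vb + (α₄*β₂*β₃^2*mu*nu)*vq
      + (α₄*β₃*nu)*vr
  have hSum : (((α₄*β₁*β₂*lam + β₁*β₂*β₄) - (α₁*α₄*β₂*mu - α₁*α₂*α₄*nu))
      * ((α₄*β₁*β₂*lam + β₁*β₂*β₄) + (α₁*α₄*β₂*mu - α₁*α₂*α₄*nu))) * (β₃^2*a)
      = 0 * (β₃^2*a) := by
    linear_combination (α₄*β₃)*hA' + α₄*hB' - hKa
  have hSum0 := mul_right_cancel₀ (mul_ne_zero (pow_ne_zero 2 hβ₃) ha) hSum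
  have hDif : (((β₁*β₂*β₃*lam - α₁*β₂*β₃*mu) - (α₁*α₂*β₃*nu + α₁*α₂*α₃))
      * ((β₁*β₂*β₃*lam - α₁*β₂*β₃*mu) + (α₁*α₂*β₃*nu + α₁*α₂*α₃))) * (α₄^2*β₃*a)
      = 0 * (α₄^2*β₃*a) := by
    linear_combination (α₄*β₃^2)*hA' - (α₄*β₃)*hB'
  have hDif0 := mul_right_cancel₀
    (mul_ne_zero (mul_ne_zero (pow_ne_zero 2 hα₄) hβ₃) ha) hDif
  have I1 : β₁^2*β₂^2*β₃*lam*g - α₁*α₂*β₁*β₂*β₃*lam*a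
      = -(α₁*α₂*a*((β₁*β₂*β₃*lam - α₁*β₂*β₃*mu) + (α₁*α₂*β₃*nu + α₁*α₂*α₃))) := by
    linear_combination (-(β₁^2*β₂^2*β₃))*E3 + vr + (-(β₂*β₃*mu))*vq + (-(β₃*nu))*vc
  have hNg : β₁*β₂*g - α₁*α₂*a ≠ 0 := by
    intro h0
    apply N
    have h1 : (β₁*β₂)*(α₁*g + β₁*q) = α₁*(β₁*β₂*g - α₁*α₂*a) := by linear_combination vq
    rw [h0, mul_zero] at h1
    exact (mul_eq_zero.mp h1).resolve_left (mul_ne_zero hβ₁ hβ₂)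
  have hPQ : (β₁*β₂*β₃*lam - α₁*β₂*β₃*mu) + (α₁*α₂*β₃*nu + α₁*α₂*α₃) ≠ 0 := by
    intro h0
    rw [h0] at I1
    have h1 : (β₁*β₂*β₃*lam)*(β₁*β₂*g - α₁*α₂*a) = 0 := by linear_combination I1
    rcases mul_eq_zero.mp h1 with h2 | h2
    · exact (mul_ne_zero (mul_ne_zero (mul_ne_zero hβ₁ hβ₂) hβ₃) hlam) h2
    · exact hNg h2
  have hS2 : β₁*β₂*β₃*lam - α₁*β₂*β₃*mu - α₁*α₂*β₃*nu - α₁*α₂*α₃ = 0 := by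
    rcases mul_eq_zero.mp hDif0 with h2 | h2
    · linear_combination h2
    · exact absurd h2 hPQ
  rcases mul_eq_zero.mp hSum0 with hUV | hUV
  · -- case U - V = 0 : contradiction
    exfalso
    have spade : 2*(α₁*α₂*α₄*β₃)*nu + α₁*α₂*α₃*α₄ + β₁*β₂*β₃*β₄ = 0 := by
      linear_combination (-(α₄))*hS2 + β₃*hUV
    rcases mul_eq_zero.mp hK with hk | hk
    · have hq0 : (2*(α₁*α₂*α₄))*(β₃*nu + α₃) = 0 := by linear_combination spade + hk
      have hq1 : β₃*nu + α₃ = 0 :=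
        (mul_eq_zero.mp hq0).resolve_left
          (mul_ne_zero two_ne_zero (mul_ne_zero (mul_ne_zero hα₁ hα₂) hα₄))
      exact hPQ (by linear_combination hS2 + 2*α₁*α₂*hq1)
    · have hq0 : (2*(α₁*α₂*α₄*β₃))*nu = 0 := by linear_combination spade - hk
      exact hnu ((mul_eq_zero.mp hq0).resolve_left
        (mul_ne_zero two_ne_zero (mul_ne_zero (mul_ne_zero (mul_ne_zero hα₁ hα₂) hα₄) hβ₃)))
  · -- case U + V = 0 : good branch
    have club : 2*(α₁*α₄*β₂*β₃)*mu + α₁*α₂*α₃*α₄ + β₁*β₂*β₃*β₄ = 0 := by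
      linear_combination (-(α₄))*hS2 + β₃*hUV
    have hAB : α₁*α₂*α₃*α₄ - β₁*β₂*β₃*β₄ = 0 := by
      rcases mul_eq_zero.mp hK with hk | hk
      · exact hk
      · exfalso
        have hq0 : (2*(α₁*α₄*β₂*β₃))*mu = 0 := by linear_combination club - hk
        exact hmu ((mul_eq_zero.mp hq0).resolve_left
          (mul_ne_zero two_ne_zero (mul_ne_zero (mul_ne_zero (mul_ne_zero hα₁ hα₄) hβ₂) hβ₃)))
    have g1 : β₂*β₃*mu + α₂*α₃ = 0 := by
      have hq0 : (2*(α₁*α₄))*(β₂*β₃*mu + α₂*α₃) = 0 := by linear_combination club + hAB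
      exact (mul_eq_zero.mp hq0).resolve_left
        (mul_ne_zero two_ne_zero (mul_ne_zero hα₁ hα₄))
    have g2 : β₁*β₂*lam - α₁*α₂*nu = 0 := by
      have hq0 : β₃*(β₁*β₂*lam - α₁*α₂*nu) = 0 := by linear_combination hS2 + α₁*g1
      exact (mul_eq_zero.mp hq0).resolve_left hβ₃
    have hQ : β₃*nu + α₃ ≠ 0 := by
      intro h0
      exact hPQ (by linear_combination hS2 + 2*α₁*α₂*h0)
    refine ⟨?_, ?_, hQ, ?_⟩
    · have hq0 : β₂*(α₃*β₁*lam + α₁*β₃*mu*nu) = 0 := by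
        linear_combination α₃*g2 + α₁*nu*g1
      exact (mul_eq_zero.mp hq0).resolve_left hβ₂
    · have hq0 : (β₁*β₂*β₃)*(α₂*β₄*nu + α₄*β₂*lam*mu) = 0 := by
        linear_combination (-(α₂*nu))*hAB + (α₄*β₂*β₃*mu)*g2 + (α₁*α₂*α₄*nu)*g1
      exact (mul_eq_zero.mp hq0).resolve_left
        (mul_ne_zero (mul_ne_zero hβ₁ hβ₂) hβ₃)
    · intro h0
      have hV : β₂*mu - α₂*nu = 0 := by
        have hq0 : (α₁*α₄)*(β₂*mu - α₂*nu) = 0 := by linear_combination hUV - β₁*β₂*h0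
        exact (mul_eq_zero.mp hq0).resolve_left (mul_ne_zero hα₁ hα₄)
      apply hQ
      have hq0 : α₂*(β₃*nu + α₃) = 0 := by linear_combination g1 - β₃*hV
      exact (mul_eq_zero.mp hq0).resolve_left hα₂

set_option maxHeartbeats 2000000 in
/-- for a nondegenerate conic inscribed in the quadrilateral
`[u],[v],[w],[x]` with tangency points `[α₁u+β₁v], [α₂v+β₂w], [α₃w+β₃x], [α₄x+β₄u]`,
the line through the first and third tangency points, the line through the second and
fourth tangency points, and the two diagonals are four concurrent lines. -/
theorem stmt14 (φ : (Fin 3 → ℝ) →ₗ[ℝ] (Fin 3 → ℝ) →ₗ[ℝ] ℝ)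
    (hsymm : ∀ y z, φ y z = φ z y)
    (hnd : ∀ y : Fin 3 → ℝ, (∀ z, φ y z = 0) → y = 0)
    (u v w x : Fin 3 → ℝ)
    (hgen₁ : LinearIndependent ℝ ![u, v, w])
    (hgen₂ : LinearIndependent ℝ ![v, w, x])
    (hgen₃ : LinearIndependent ℝ ![w, x, u])
    (hgen₄ : LinearIndependent ℝ ![x, u, v])
    (α₁ β₁ α₂ β₂ α₃ β₃ α₄ β₄ : ℝ)
    (hα₁ : α₁ ≠ 0) (hβ₁ : β₁ ≠ 0) (hα₂ : α₂ ≠ 0) (hβ₂ : β₂ ≠ 0)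
    (hα₃ : α₃ ≠ 0) (hβ₃ : β₃ ≠ 0) (hα₄ : α₄ ≠ 0) (hβ₄ : β₄ ≠ 0)
    (h₁ : φ (α₁ • u + β₁ • v) (α₁ • u + β₁ • v) = 0)
    (h₁u : φ u (α₁ • u + β₁ • v) = 0) (h₁v : φ (α₁ • u + β₁ • v) v = 0)
    (h₂ : φ (α₂ • v + β₂ • w) (α₂ • v + β₂ • w) = 0)
    (h₂v : φ v (α₂ • v + β₂ • w) = 0) (h₂w : φ (α₂ • v + β₂ • w) w = 0)
    (h₃ : φ (α₃ • w + β₃ • x) (α₃ • w + β₃ • x) = 0)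
    (h₃w : φ w (α₃ • w + β₃ • x) = 0) (h₃x : φ (α₃ • w + β₃ • x) x = 0)
    (h₄ : φ (α₄ • x + β₄ • u) (α₄ • x + β₄ • u) = 0)
    (h₄x : φ x (α₄ • x + β₄ • u) = 0) (h₄u : φ (α₄ • x + β₄ • u) u = 0) :
    ∃ m : Fin 3 → ℝ, m ≠ 0 ∧
      m ∈ Submodule.span ℝ ({α₁ • u + β₁ • v, α₃ • w + β₃ • x} : Set (Fin 3 → ℝ)) ∧
      m ∈ Submodule.span ℝ ({α₂ • v + β₂ • w, α₄ • x + β₄ • u} : Set (Fin 3 → ℝ)) ∧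
      m ∈ Submodule.span ℝ ({u, w} : Set (Fin 3 → ℝ)) ∧
      m ∈ Submodule.span ℝ ({v, x} : Set (Fin 3 → ℝ)) := by
  have hcard : Fintype.card (Fin 3) = Module.finrank ℝ (Fin 3 → ℝ) := by
    simp [Module.finrank_fin_fun]
  have hspan₁ : Submodule.span ℝ (Set.range ![u, v, w]) = ⊤ := by
    have := (basisOfLinearIndependentOfCardEqFinrank hgen₁ hcard).span_eq
    rwa [coe_basisOfLinearIndependentOfCardEqFinrank] at this
  have hspan₄ : Submodule.span ℝ (Set.range ![x, u, v]) = ⊤ := by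
    have := (basisOfLinearIndependentOfCardEqFinrank hgen₄ hcard).span_eq
    rwa [coe_basisOfLinearIndependentOfCardEqFinrank] at this
  -- decompose x in the basis u, v, w
  obtain ⟨cc, hcc⟩ := Submodule.mem_span_range_iff_exists_fun ℝ |>.mp
    (hspan₁ ▸ Submodule.mem_top : x ∈ Submodule.span ℝ (Set.range ![u, v, w]))
  rw [Fin.sum_univ_three] at hcc
  simp only [Matrix.cons_val_zero, Matrix.cons_val_one, Matrix.head_cons,
    Matrix.cons_val_two, Matrix.tail_cons] at hcc
  set lam := cc 0 with hlamdef
  set mu := cc 1 with hmudef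
  set nu := cc 2 with hnudef
  -- hcc : lam • u + mu • v + nu • w = x
  -- scalar identities from tangency
  have L1 : α₁ * φ u u + β₁ * φ u v = 0 := by
    simpa [map_add, map_smul, smul_eq_mul] using h₁u
  have L2 : α₁ * φ u v + β₁ * φ v v = 0 := by
    simpa [map_add, map_smul, LinearMap.add_apply, LinearMap.smul_apply, smul_eq_mul] using h₁v
  have L3 : α₂ * φ v v + β₂ * φ v w = 0 := by
    simpa [map_add, map_smul, smul_eq_mul] using h₂v
  have L4 : α₂ * φ v w + β₂ * φ w w = 0 := by
    simpa [map_add, map_smul, LinearMap.add_apply, LinearMap.smul_apply, smul_eq_mul] using h₂w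
  have L5 : α₃ * φ w w + β₃ * φ w x = 0 := by
    simpa [map_add, map_smul, smul_eq_mul] using h₃w
  have L6 : α₃ * φ w x + β₃ * φ x x = 0 := by
    have : α₃ * φ w x + β₃ * φ x x = φ (α₃ • w + β₃ • x) x := by
      simp only [map_add, map_smul, LinearMap.add_apply, LinearMap.smul_apply, smul_eq_mul]
      try rw [hsymm w x]
      try ring
    rw [this, h₃x]
  have L7 : α₄ * φ x x + β₄ * φ x u = 0 := by
    simpa [map_add, map_smul, smul_eq_mul] using h₄x
  have L8 : α₄ * φ x u + β₄ * φ u u = 0 := by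
    simpa [map_add, map_smul, LinearMap.add_apply, LinearMap.smul_apply, smul_eq_mul] using h₄u
  -- expansions of φ x ·
  have E1 : φ x u = lam * φ u u + mu * φ u v + nu * φ u w := by
    rw [← hcc]
    simp only [map_add, map_smul, LinearMap.add_apply, LinearMap.smul_apply, smul_eq_mul,
      hsymm v u, hsymm w u]
    try ring
  have E2 : φ x v = lam * φ u v + mu * φ v v + nu * φ v w := by
    rw [← hcc]
    simp only [map_add, map_smul, LinearMap.add_apply, LinearMap.smul_apply, smul_eq_mul,
      hsymm w v]
    try ring
  have E3 : φ w x = lam * φ u w + mu * φ v w + nu * φ w w := by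
    rw [hsymm w x, ← hcc]
    simp only [map_add, map_smul, LinearMap.add_apply, LinearMap.smul_apply, smul_eq_mul,
      hsymm v w]
    try ring
  have E4 : φ x x = lam * φ x u + mu * φ x v + nu * φ w x := by
    calc φ x x = φ (lam • u + mu • v + nu • w) x := by rw [hcc]
    _ = lam * φ u x + mu * φ v x + nu * φ w x := by
        simp only [map_add, map_smul, LinearMap.add_apply, LinearMap.smul_apply, smul_eq_mul]
        try ring
    _ = lam * φ x u + mu * φ x v + nu * φ w x := by rw [hsymm u x, hsymm v x]
  -- a ≠ 0
  have ha : φ u u ≠ 0 := by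
    intro ha0
    have p0 : φ u v = 0 := by
      have h2 : β₁ * φ u v = 0 := by linear_combination L1 - α₁*ha0
      exact (mul_eq_zero.mp h2).resolve_left hβ₁
    have b0 : φ v v = 0 := by
      have h2 : β₁ * φ v v = 0 := by linear_combination L2 - α₁*p0
      exact (mul_eq_zero.mp h2).resolve_left hβ₁
    have q0 : φ v w = 0 := by
      have h2 : β₂ * φ v w = 0 := by linear_combination L3 - α₂*b0
      exact (mul_eq_zero.mp h2).resolve_left hβ₂
    have c0 : φ w w = 0 := by
      have h2 : β₂ * φ w w = 0 := by linear_combination L4 - α₂*q0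
      exact (mul_eq_zero.mp h2).resolve_left hβ₂
    have r0 : φ w x = 0 := by
      have h2 : β₃ * φ w x = 0 := by linear_combination L5 - α₃*c0
      exact (mul_eq_zero.mp h2).resolve_left hβ₃
    have d0 : φ x x = 0 := by
      have h2 : β₃ * φ x x = 0 := by linear_combination L6 - α₃*r0
      exact (mul_eq_zero.mp h2).resolve_left hβ₃
    have e0 : φ x u = 0 := by
      have h2 : β₄ * φ x u = 0 := by linear_combination L7 - α₄*d0
      exact (mul_eq_zero.mp h2).resolve_left hβ₄
    have hz : ∀ z, φ u z = 0 := by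
      intro z
      obtain ⟨t, ht⟩ := Submodule.mem_span_range_iff_exists_fun ℝ |>.mp
        (hspan₄ ▸ Submodule.mem_top : z ∈ Submodule.span ℝ (Set.range ![x, u, v]))
      rw [Fin.sum_univ_three] at ht
      simp only [Matrix.cons_val_zero, Matrix.cons_val_one, Matrix.head_cons,
        Matrix.cons_val_two, Matrix.tail_cons] at ht
      rw [← ht]
      simp [map_add, map_smul, smul_eq_mul, ha0, p0, hsymm u x, e0]
    have hu0 : u = 0 := hnd u hz
    exact hgen₁.ne_zero 0 (by simpa using hu0)
  -- lam, mu, nu nonzero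
  have hlam : lam ≠ 0 := by
    intro h0
    have hsum : ∑ i, (![mu, nu, -1] : Fin 3 → ℝ) i • ![v, w, x] i = 0 := by
      rw [Fin.sum_univ_three]
      simp only [Matrix.cons_val_zero, Matrix.cons_val_one, Matrix.head_cons,
        Matrix.cons_val_two, Matrix.tail_cons]
      rw [← hcc, h0]
      module
    have h2 := Fintype.linearIndependent_iff.mp hgen₂ _ hsum 2
    norm_num at h2
    simp [Matrix.cons_val] at h2
  have hmu : mu ≠ 0 := by
    intro h0
    have hsum : ∑ i, (![nu, -1, lam] : Fin 3 → ℝ) i • ![w, x, u] i = 0 := by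
      rw [Fin.sum_univ_three]
      simp only [Matrix.cons_val_zero, Matrix.cons_val_one, Matrix.head_cons,
        Matrix.cons_val_two, Matrix.tail_cons]
      rw [← hcc, h0]
      module
    have h2 := Fintype.linearIndependent_iff.mp hgen₃ _ hsum 1
    norm_num at h2
  have hnu : nu ≠ 0 := by
    intro h0
    have hsum : ∑ i, (![1, -lam, -mu] : Fin 3 → ℝ) i • ![x, u, v] i = 0 := by
      rw [Fin.sum_univ_three]
      simp only [Matrix.cons_val_zero, Matrix.cons_val_one, Matrix.head_cons,
        Matrix.cons_val_two, Matrix.tail_cons]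
      rw [← hcc, h0]
      module
    have h2 := Fintype.linearIndependent_iff.mp hgen₄ _ hsum 0
    norm_num at h2
  -- nondegeneracy consequence
  have hT1 : (α₁ • u + β₁ • v : Fin 3 → ℝ) ≠ 0 := by
    intro h0
    have hsum : ∑ i, (![α₁, β₁, 0] : Fin 3 → ℝ) i • ![u, v, w] i = 0 := by
      rw [Fin.sum_univ_three]
      simp only [Matrix.cons_val_zero, Matrix.cons_val_one, Matrix.head_cons,
        Matrix.cons_val_two, Matrix.tail_cons]
      rw [zero_smul, add_zero]
      exact h0
    have h2 := Fintype.linearIndependent_iff.mp hgen₁ _ hsum 0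
    norm_num at h2
    exact hα₁ h2
  have N : α₁ * φ u w + β₁ * φ v w ≠ 0 := by
    intro h0
    have c1 : φ (α₁ • u + β₁ • v) u = 0 := by rw [hsymm]; exact h₁u
    have c3 : φ (α₁ • u + β₁ • v) w = 0 := by
      have : φ (α₁ • u + β₁ • v) w = α₁ * φ u w + β₁ * φ v w := by
        simp only [map_add, map_smul, LinearMap.add_apply, LinearMap.smul_apply, smul_eq_mul]
        try ring
      rw [this, h0]
    have hz : ∀ z, φ (α₁ • u + β₁ • v) z = 0 := by
      intro z
      obtain ⟨t, ht⟩ := Submodule.mem_span_range_iff_exists_fun ℝ |>.mp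
        (hspan₁ ▸ Submodule.mem_top : z ∈ Submodule.span ℝ (Set.range ![u, v, w]))
      rw [Fin.sum_univ_three] at ht
      simp only [Matrix.cons_val_zero, Matrix.cons_val_one, Matrix.head_cons,
        Matrix.cons_val_two, Matrix.tail_cons] at ht
      rw [← ht]
      simp only [map_add, map_smul, LinearMap.add_apply, LinearMap.smul_apply, smul_eq_mul]
      linear_combination (t 0)*L1 + (t 1)*L2 + (t 2)*h0 + ((t 0)*β₁)*(hsymm v u)
    exact hT1 (hnd _ hz)
  -- the key scalar computation
  obtain ⟨C1, C2, hQ, hL4⟩ := stmt14_key α₁ β₁ α₂ β₂ α₃ β₃ α₄ β₄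
    (φ u u) (φ v v) (φ w w) (φ x x) (φ u v) (φ v w) (φ w x) (φ x u) (φ x v)
    lam mu nu (φ u w)
    hα₁ hβ₁ hα₂ hβ₂ hα₃ hβ₃ hα₄ hβ₄ ha hlam hmu hnu
    L1 L2 L3 L4 L5 L6 L7 L8 E1 E2 E3 E4 N
  -- the concurrency point
  refine ⟨lam • u + nu • w, ?_, ?_, ?_, ?_, ?_⟩
  · intro h0
    have hsum : ∑ i, (![lam, 0, nu] : Fin 3 → ℝ) i • ![u, v, w] i = 0 := by
      rw [Fin.sum_univ_three]
      simp only [Matrix.cons_val_zero, Matrix.cons_val_one, Matrix.head_cons,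
        Matrix.cons_val_two, Matrix.tail_cons]
      rw [zero_smul, add_zero]
      exact h0
    have h2 := Fintype.linearIndependent_iff.mp hgen₁ _ hsum 0
    norm_num at h2
    exact hlam h2
  · rw [Submodule.mem_span_pair]
    refine ⟨-((nu / (β₃ * nu + α₃)) * β₃ * mu / β₁), nu / (β₃ * nu + α₃), ?_⟩
    rw [← hcc]
    have hQ' : nu * β₃ + α₃ ≠ 0 := by rwa [mul_comm]
    match_scalars
    · field_simp
      linear_combination -C1
    · field_simp
      try ring
      try exact Or.inl (by ring)
    · field_simp
      try ring
      try exact Or.inl (by ring)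
  · rw [Submodule.mem_span_pair]
    refine ⟨-((lam / (α₄ * lam + β₄)) * α₄ * mu / α₂), lam / (α₄ * lam + β₄), ?_⟩
    rw [← hcc]
    have hL4' : lam * α₄ + β₄ ≠ 0 := by rwa [mul_comm]
    match_scalars
    · field_simp
      try ring
      try exact Or.inl (by ring)
    · field_simp
      linear_combination -C2
    · field_simp
      try ring
      try exact Or.inl (by ring)
      try linear_combination (-(α₄*lam + β₄))*C2
  · rw [Submodule.mem_span_pair]
    exact ⟨lam, nu, rfl⟩
  · rw [Submodule.mem_span_pair]
    refine ⟨-mu, 1, ?_⟩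
    rw [← hcc]
    module
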